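/- Let V(z, z̄, z⁺) be the Lyapunov function with parameter γ and let T₁, T₂ be the extragradient operators. If γ ∈ (0, 1/L), z ∈ H, z̄ = T₁(z), z⁺ = T₂(z), then V(z, z̄, z⁺) = 0 if and only if z = z̄ = z⁺ and z ∈ zer(F + ∂g). -/

import Mathlib

open scoped RealInnerProductSpace

/-- `g` is proper: finite somewhere and never `⊥`. -/
def IsProperEF {H : Type*} (g : H → EReal) : Prop :=
  (∃ x, g x ≠ ⊤) ∧ ∀ x, g x ≠ ⊥

/-- `g` is convex (extended-real-valued). -/
def IsConvexEF {H : Type*} [NormedAddCommGroup H] [InnerProductSpace ℝ H]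
    (g : H → EReal) : Prop :=
  ∀ x y : H, ∀ a b : ℝ, 0 ≤ a → 0 ≤ b → a + b = 1 →
    g (a • x + b • y) ≤ (a : EReal) * g x + (b : EReal) * g y

/-- `ξ` is a subgradient of `g` at `z`, i.e. `ξ ∈ ∂g(z)`. -/
def InSubdiff {H : Type*} [NormedAddCommGroup H] [InnerProductSpace ℝ H]
    (g : H → EReal) (z ξ : H) : Prop :=
  ∀ y : H, g z + ((⟪ξ, y - z⟫ : ℝ) : EReal) ≤ g y

/-- `p = prox_{γ g}(x)`, i.e. `p` minimizes `g(·) + (1/(2γ))‖x - ·‖²`. -/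
def IsProx {H : Type*} [NormedAddCommGroup H] [InnerProductSpace ℝ H]
    (g : H → EReal) (γ : ℝ) (x p : H) : Prop :=
  ∀ y : H, g p + ((1 / (2 * γ) * ‖x - p‖ ^ 2 : ℝ) : EReal) ≤
    g y + ((1 / (2 * γ) * ‖x - y‖ ^ 2 : ℝ) : EReal)

/-- The Lyapunov function `V`. -/
noncomputable def lyapV {H : Type*} [NormedAddCommGroup H] [InnerProductSpace ℝ H]
    (F : H → H) (γ : ℝ) (z zb zp : H) : ℝ :=
  (2 / γ) * ⟪z - zp, F z - F zb⟫ + (1 / γ ^ 2) * ‖zp - zb‖ ^ 2 + (1 / γ ^ 2) * ‖z - zp‖ ^ 2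

section aux

variable {H : Type*} [NormedAddCommGroup H] [InnerProductSpace ℝ H]

lemma prox_finite {g : H → EReal} (hproper : IsProperEF g) {γ : ℝ} {x p : H}
    (hprox : IsProx g γ x p) : ∃ r : ℝ, g p = (r : EReal) := by
  obtain ⟨⟨x₀, hx₀⟩, hbot⟩ := hproper
  have htop : g p ≠ ⊤ := by
    intro htop
    have h := hprox x₀
    rw [htop] at h
    have hl : (⊤ : EReal) + ((1 / (2 * γ) * ‖x - p‖ ^ 2 : ℝ) : EReal) = ⊤ :=
      EReal.top_add_of_ne_bot (EReal.coe_ne_bot _)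
    rw [hl] at h
    lift g x₀ to ℝ using ⟨hx₀, hbot x₀⟩ with t
    rw [← EReal.coe_add] at h
    exact (EReal.coe_lt_top _).not_ge h
  exact ⟨(g p).toReal, (EReal.coe_toReal htop (hbot p)).symm⟩

lemma prox_strong {g : H → EReal} (hproper : IsProperEF g) (hconv : IsConvexEF g)
    {γ : ℝ} {x p : H} (hprox : IsProx g γ x p)
    {r : ℝ} (hr : g p = (r : EReal)) (n : ℕ) (y : H) :
    ((r + 1 / (2 * γ) * ‖x - p‖ ^ 2 + (1 - (1/2 : ℝ) ^ n) * (1 / (2 * γ)) * ‖y - p‖ ^ 2 : ℝ) : EReal)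
      ≤ g y + ((1 / (2 * γ) * ‖x - y‖ ^ 2 : ℝ) : EReal) := by
  induction n generalizing y with
  | zero =>
    have h := hprox y
    rw [hr, ← EReal.coe_add] at h
    convert h using 2
    ring
  | succ n ih =>
    by_cases hy : g y = ⊤
    · rw [hy, EReal.top_add_of_ne_bot (EReal.coe_ne_bot _)]
      exact le_top
    lift g y to ℝ using ⟨hy, hproper.2 y⟩ with t ht
    set m : H := (1/2 : ℝ) • p + (1/2 : ℝ) • y with hm
    have hconvm : g m ≤ ((r/2 + t/2 : ℝ) : EReal) := by
      have h := hconv p y (1/2) (1/2) (by norm_num) (by norm_num) (by norm_num)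
      rw [hr, ← ht] at h
      calc g m ≤ ((1/2 : ℝ) : EReal) * (r : EReal) + ((1/2 : ℝ) : EReal) * (t : EReal) := h
        _ = ((r/2 + t/2 : ℝ) : EReal) := by norm_cast; ring
    have hIH := ih m
    have hchain : ((r + 1 / (2 * γ) * ‖x - p‖ ^ 2 + (1 - (1/2 : ℝ) ^ n) * (1 / (2 * γ)) * ‖m - p‖ ^ 2 : ℝ) : EReal)
        ≤ ((r/2 + t/2 + 1 / (2 * γ) * ‖x - m‖ ^ 2 : ℝ) : EReal) := by
      calc _ ≤ g m + ((1 / (2 * γ) * ‖x - m‖ ^ 2 : ℝ) : EReal) := hIH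
        _ ≤ ((r/2 + t/2 : ℝ) : EReal) + ((1 / (2 * γ) * ‖x - m‖ ^ 2 : ℝ) : EReal) :=
            add_le_add_left hconvm _
        _ = _ := by rw [← EReal.coe_add]
    rw [EReal.coe_le_coe_iff] at hchain
    rw [← EReal.coe_add, EReal.coe_le_coe_iff]
    have hmp : m - p = (1/2 : ℝ) • (y - p) := by rw [hm]; module
    have hQ : ‖m - p‖ ^ 2 = ‖y - p‖ ^ 2 / 4 := by
      rw [hmp, norm_smul]
      simp [Real.norm_eq_abs]
      ring
    have hxp : x - p = (x - m) + (1/2 : ℝ) • (y - p) := by rw [hm]; module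
    have hxy : x - y = (x - m) - (1/2 : ℝ) • (y - p) := by rw [hm]; module
    have hpar := parallelogram_law_with_norm ℝ (x - m) ((1/2 : ℝ) • (y - p))
    rw [← hxp, ← hxy] at hpar
    have hhalf : ‖(1/2 : ℝ) • (y - p)‖ = ‖y - p‖ / 2 := by
      rw [norm_smul]; simp [Real.norm_eq_abs]; ring
    rw [hhalf] at hpar
    have hM : ‖x - m‖ ^ 2 = ‖x - p‖ ^ 2 / 2 + ‖x - y‖ ^ 2 / 2 - ‖y - p‖ ^ 2 / 4 := by
      nlinarith [hpar]
    rw [hQ, hM] at hchain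
    have hpow : ((1:ℝ)/2) ^ (n+1) = (1/2 : ℝ) ^ n / 2 := by ring
    rw [hpow]
    linarith

lemma prox_subdiff {g : H → EReal} (hproper : IsProperEF g) (hconv : IsConvexEF g)
    {γ : ℝ} (hγ : 0 < γ) {x p : H} (hprox : IsProx g γ x p)
    {r : ℝ} (hr : g p = (r : EReal)) :
    InSubdiff g p (γ⁻¹ • (x - p)) := by
  intro y
  by_cases hy : g y = ⊤
  · rw [hy]; exact le_top
  lift g y to ℝ using ⟨hy, hproper.2 y⟩ with t ht
  rw [hr, ← EReal.coe_add, EReal.coe_le_coe_iff]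
  set I : ℝ := ⟪γ⁻¹ • (x - p), y - p⟫ with hI
  by_contra hcon
  push_neg at hcon
  set c : ℝ := 1 / (2 * γ) with hc
  have hc0 : 0 < c := by rw [hc]; positivity
  set Q : ℝ := ‖y - p‖ ^ 2 with hQ
  have hIinner : I = γ⁻¹ * ⟪x - p, y - p⟫ := real_inner_smul_left _ _ _
  have hexp : ‖x - y‖ ^ 2 = ‖x - p‖ ^ 2 - 2 * ⟪x - p, y - p⟫ + Q := by
    have h9 : x - y = (x - p) - (y - p) := by abel
    rw [h9, hQ, norm_sub_sq_real]
  by_cases hQ0 : Q = 0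
  · have hyp : y - p = 0 := by
      rw [hQ] at hQ0
      have := pow_eq_zero_iff (n := 2) (by norm_num) |>.mp hQ0
      exact norm_eq_zero.mp this
    have hyeq : y = p := by rwa [sub_eq_zero] at hyp
    have hteq : (t : EReal) = (r : EReal) := by rw [ht, hyeq, hr]
    have htr : t = r := by exact_mod_cast hteq
    have hI0 : I = 0 := by rw [hI, hyp, inner_zero_right]
    rw [htr, hI0] at hcon
    linarith
  have hQpos : 0 < Q := lt_of_le_of_ne (by rw [hQ]; positivity) (Ne.symm hQ0)
  have hgap : 0 < r + I - t := by linarith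
  obtain ⟨n, hn⟩ := exists_pow_lt_of_lt_one (div_pos hgap (mul_pos hc0 hQpos)) (by norm_num : (1/2 : ℝ) < 1)
  have h := prox_strong hproper hconv hprox hr n y
  rw [← ht, ← EReal.coe_add, EReal.coe_le_coe_iff] at h
  have hmul : (1/2 : ℝ) ^ n * (c * Q) < r + I - t := by
    calc (1/2 : ℝ) ^ n * (c * Q) < ((r + I - t) / (c * Q)) * (c * Q) :=
          mul_lt_mul_of_pos_right hn (mul_pos hc0 hQpos)
      _ = r + I - t := div_mul_cancel₀ _ (mul_pos hc0 hQpos).ne'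
  rw [hexp] at h
  rw [← hQ, ← hc] at h
  have h2c : 2 * c = γ⁻¹ := by rw [hc]; field_simp
  have hI2 : I = 2 * c * ⟪x - p, y - p⟫ := by rw [hIinner, h2c]
  linarith [h, hmul, hcon, hI2]

lemma scalar_final (A C t D U uv ud vv vd a q : ℝ)
    (hE : U^2 + 2*uv + 2*ud + 2*vv + 2*vd = 0)
    (R1 : A = 2*a*uv + ud) (R2 : C = 2*a*vd + D^2) (R3 : t^2 = 4*a^2*vv + 4*a*vd + D^2)
    (G1 : t ≤ D) (CS1 : -(U*t) ≤ A) (CS2 : C ≤ t*D)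
    (F1 : 0 ≤ ud) (F2 : D ≤ q*U)
    (hU : 0 ≤ U) (ht : 0 ≤ t) (hD : 0 ≤ D)
    (hq0 : 0 < q) (haq : q < a) (hah : 1/2 ≤ a) (ha1 : a ≤ 1) : U = 0 := by
  have hDU : D ≤ U := by nlinarith
  have hp1 : 0 ≤ (D - t) * ((D - t) + 2*a*(U - D)) := by
    apply mul_nonneg (by linarith)
    nlinarith
  have hp2 : 0 ≤ 2*a*U*(q*U - D) := by
    apply mul_nonneg (by positivity) (by linarith)
  have hp3 : 0 ≤ (4*a^2 - 2*a)*ud := by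
    apply mul_nonneg (by nlinarith) F1
  have hp4 : 0 ≤ 2*a*(A + U*t) := by
    apply mul_nonneg (by linarith) (by linarith)
  have hp5 : 0 ≤ (2 - 2*a)*(t*D - C) := by
    apply mul_nonneg (by linarith) (by linarith)
  have hEa : 2*a^2*(U^2 + 2*uv + 2*ud + 2*vv + 2*vd) = 0 := mul_eq_zero_of_right _ hE
  have q1 : 2*a*A = 4*a^2*uv + 2*a*ud := by linear_combination (2*a) * R1
  have q2 : 2*a*C = 4*a^2*vd + 2*a*D^2 := by linear_combination (2*a) * R2
  have q3 : 2*C = 4*a*vd + 2*D^2 := by linear_combination 2 * R2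
  have hfin : 2*a*(a - q)*U^2 ≤ 0 := by linarith [hEa, q1, q2, q3, R3, hp1, hp2, hp3, hp4, hp5]
  have hu2 : U^2 ≤ 0 := by
    by_contra hcon
    push_neg at hcon
    have : 0 < 2*a*(a - q)*U^2 := by
      apply mul_pos _ hcon
      apply mul_pos (by linarith) (by linarith)
    linarith
  nlinarith

end aux

set_option maxHeartbeats 1000000 in
theorem stmt14 {H : Type*} [NormedAddCommGroup H] [InnerProductSpace ℝ H] [CompleteSpace H]
    (F : H → H) (L γ : ℝ) (hL : 0 < L)
    (hmono : ∀ x y : H, 0 ≤ ⟪F x - F y, x - y⟫)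
    (hlip : ∀ x y : H, ‖F x - F y‖ ≤ L * ‖x - y‖)
    (g : H → EReal) (hproper : IsProperEF g) (hconv : IsConvexEF g)
    (hlsc : LowerSemicontinuous g)
    (hγ0 : 0 < γ) (hγ1 : γ < 1 / L)
    (z zb zp : H)
    (hzb : IsProx g γ (z - γ • F z) zb)
    (hzp : IsProx g γ (z - γ • F zb) zp) :
    lyapV F γ z zb zp = 0 ↔ (z = zb ∧ zb = zp ∧ InSubdiff g z (-F z)) := by
  have hq1 : γ * L < 1 := (lt_div_iff₀ hL).mp hγ1
  have hq0 : 0 < γ * L := mul_pos hγ0 hL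
  set q : ℝ := γ * L with hqdef
  constructor
  · -- hard direction
    intro hV
    -- finiteness
    obtain ⟨rb, hrb⟩ := prox_finite hproper hzb
    obtain ⟨rp, hrp⟩ := prox_finite hproper hzp
    -- choose a
    obtain ⟨n0, hn0⟩ := exists_pow_lt_of_lt_one (sub_pos.mpr hq1) (by norm_num : (1/2 : ℝ) < 1)
    set e : ℝ := (1/2 : ℝ) ^ (n0 + 1) with hedef
    have he_pos : 0 < e := by positivity
    have he_lt : e < 1 - q := by
      have h1 : e ≤ (1/2 : ℝ) ^ n0 := by
        rw [hedef, pow_succ]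
        nlinarith [pow_pos (by norm_num : (0:ℝ) < 1/2) n0]
      linarith
    have he_half : e ≤ 1/2 := by
      rw [hedef, pow_succ]
      nlinarith [pow_le_one₀ (by norm_num : (0:ℝ) ≤ 1/2) (by norm_num : (1:ℝ)/2 ≤ 1) (n := n0)]
    set a : ℝ := 1 - e with hadef
    have ha_q : q < a := by rw [hadef]; linarith
    have ha_half : 1/2 ≤ a := by rw [hadef]; linarith
    have ha_one : a ≤ 1 := by rw [hadef]; linarith
    have ha_pos : 0 < a := by linarith
    -- vectors
    set u : H := z - zb with hu
    set v : H := zb - zp with hv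
    set d : H := γ • (F z - F zb) with hd
    set c : ℝ := 1 / (2 * γ) with hc
    have hc0 : 0 < c := by rw [hc]; positivity
    -- F1 : 0 ≤ ⟪u, d⟫
    have F1 : 0 ≤ ⟪u, d⟫ := by
      rw [hd, real_inner_smul_right, hu, real_inner_comm]
      exact mul_nonneg hγ0.le (hmono z zb)
    -- F2 : ‖d‖ ≤ q * ‖u‖
    have F2 : ‖d‖ ≤ q * ‖u‖ := by
      rw [hd, norm_smul, Real.norm_eq_abs, abs_of_pos hγ0, hu, hqdef]
      calc γ * ‖F z - F zb‖ ≤ γ * (L * ‖z - zb‖) :=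
            mul_le_mul_of_nonneg_left (hlip z zb) hγ0.le
        _ = γ * L * ‖z - zb‖ := by ring
    -- F3 : a * ‖v‖^2 + ⟪v, d⟫ ≤ 0
    have P1 := prox_strong hproper hconv hzb hrb (n0 + 1) zp
    have P2 := prox_strong hproper hconv hzp hrp (n0 + 1) zb
    rw [hrp, ← EReal.coe_add, EReal.coe_le_coe_iff] at P1
    rw [hrb, ← EReal.coe_add, EReal.coe_le_coe_iff] at P2
    rw [← hedef] at P1 P2
    rw [← hc] at P1 P2
    have F3 : a * ‖v‖^2 + ⟪v, d⟫ ≤ 0 := by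
      have e1 : (z - γ • F z) - zb = ((z - γ • F z) - zp) - v := by rw [hv]; module
      have e2 : (z - γ • F zb) - zp = ((z - γ • F zb) - zb) + v := by rw [hv]; module
      have e3 : ((z - γ • F zb) - zb) - ((z - γ • F z) - zp) = d - v := by
        rw [hd, hv]; module
      have e4 : ⟪(z - γ • F zb) - zb, v⟫ - ⟪(z - γ • F z) - zp, v⟫ = ⟪d, v⟫ - ‖v‖^2 := by
        rw [← inner_sub_left, e3, inner_sub_left, real_inner_self_eq_norm_sq]
      have n1 : ‖(z - γ • F z) - zb‖^2
          = ‖(z - γ • F z) - zp‖^2 - 2*⟪(z - γ • F z) - zp, v⟫ + ‖v‖^2 := by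
        rw [e1, norm_sub_sq_real]
      have n2 : ‖(z - γ • F zb) - zp‖^2
          = ‖(z - γ • F zb) - zb‖^2 + 2*⟪(z - γ • F zb) - zb, v⟫ + ‖v‖^2 := by
        rw [e2, norm_add_sq_real]
      have nv1 : ‖zp - zb‖ = ‖v‖ := by rw [hv, norm_sub_rev]
      have nv2 : ‖zb - zp‖ = ‖v‖ := by rw [hv]
      rw [nv1] at P1
      rw [nv2] at P2
      rw [← hadef] at P1 P2
      have hA : c*‖(z - γ • F z) - zb‖^2
          = c*‖(z - γ • F z) - zp‖^2 - 2*c*⟪(z - γ • F z) - zp, v⟫ + c*‖v‖^2 := by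
        linear_combination c * n1
      have hB : c*‖(z - γ • F zb) - zp‖^2
          = c*‖(z - γ • F zb) - zb‖^2 + 2*c*⟪(z - γ • F zb) - zb, v⟫ + c*‖v‖^2 := by
        linear_combination c * n2
      have hE4 : 2*c*⟪(z - γ • F zb) - zb, v⟫ - 2*c*⟪(z - γ • F z) - zp, v⟫
          = 2*c*⟪d, v⟫ - 2*c*‖v‖^2 := by
        linear_combination (2*c) * e4
      have hsum : 2 * c * (⟪d, v⟫ + a * ‖v‖^2) ≤ 0 := by linarith [P1, P2, hA, hB, hE4]
      have hvd : ⟪v, d⟫ = ⟪d, v⟫ := real_inner_comm _ _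
      by_contra hcon
      push_neg at hcon
      have hpos : 0 < 2 * c * (⟪d, v⟫ + a * ‖v‖^2) := by
        apply mul_pos (by linarith)
        linarith
      linarith
    -- F5 : the Lyapunov identity
    have F5 : γ^2 * lyapV F γ z zb zp
        = ‖u‖^2 + 2*⟪u,v⟫ + 2*⟪u,d⟫ + 2*‖v‖^2 + 2*⟪v,d⟫ := by
      have huv : z - zp = u + v := by rw [hu, hv]; module
      have hnv : ‖zp - zb‖ = ‖v‖ := by rw [hv, norm_sub_rev]
      have hid : ⟪z - zp, F z - F zb⟫ = γ⁻¹ * (⟪u, d⟫ + ⟪v, d⟫) := by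
        rw [huv, inner_add_left]
        have h1 : ⟪u, d⟫ = γ * ⟪u, F z - F zb⟫ := by rw [hd, real_inner_smul_right]
        have h2 : ⟪v, d⟫ = γ * ⟪v, F z - F zb⟫ := by rw [hd, real_inner_smul_right]
        rw [h1, h2]
        field_simp
      have hnorm : ‖z - zp‖^2 = ‖u‖^2 + 2*⟪u,v⟫ + ‖v‖^2 := by
        rw [huv, norm_add_sq_real]
      rw [lyapV, hid, hnv, hnorm]
      field_simp
      ring
    have hE : ‖u‖^2 + 2*⟪u,v⟫ + 2*⟪u,d⟫ + 2*‖v‖^2 + 2*⟪v,d⟫ = 0 := by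
      rw [← F5, hV]; ring
    -- s and scalar facts
    set s : H := (2*a) • v + d with hs
    have R1 : ⟪u, s⟫ = 2*a*⟪u,v⟫ + ⟪u,d⟫ := by
      rw [hs, inner_add_right, real_inner_smul_right]
    have R2 : ⟪s, d⟫ = 2*a*⟪v,d⟫ + ‖d‖^2 := by
      rw [hs, inner_add_left, real_inner_smul_left, real_inner_self_eq_norm_sq]
    have R3 : ‖s‖^2 = 4*a^2*‖v‖^2 + 4*a*⟪v,d⟫ + ‖d‖^2 := by
      rw [hs, norm_add_sq_real, norm_smul, real_inner_smul_left, Real.norm_eq_abs,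
        abs_of_pos (by linarith : (0:ℝ) < 2*a)]
      ring
    have G1 : ‖s‖ ≤ ‖d‖ := by
      have hs2 : ‖s‖^2 ≤ ‖d‖^2 := by nlinarith [R3, F3, ha_pos]
      nlinarith [norm_nonneg s, norm_nonneg d, hs2]
    have CS1 : -(‖u‖ * ‖s‖) ≤ ⟪u, s⟫ := neg_le_of_abs_le (abs_real_inner_le_norm u s)
    have CS2 : ⟪s, d⟫ ≤ ‖s‖ * ‖d‖ := le_of_abs_le (abs_real_inner_le_norm s d)
    have hU0 : ‖u‖ = 0 :=
      scalar_final ⟪u,s⟫ ⟪s,d⟫ ‖s‖ ‖d‖ ‖u‖ ⟪u,v⟫ ⟪u,d⟫ (‖v‖^2) ⟪v,d⟫ a q hE R1 R2 R3 G1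
        CS1 CS2 F1 F2 (norm_nonneg u) (norm_nonneg s) (norm_nonneg d) hq0 ha_q ha_half ha_one
    have hu0 : u = 0 := norm_eq_zero.mp hU0
    have hzzb : z = zb := by rwa [hu, sub_eq_zero] at hu0
    -- d = 0
    have hd0 : d = 0 := by rw [hd, hzzb, sub_self, smul_zero]
    have hv0 : v = 0 := by
      rw [hd0, inner_zero_right] at F3
      have : ‖v‖ = 0 := by nlinarith [norm_nonneg v, ha_pos]
      exact norm_eq_zero.mp this
    have hzbzp : zb = zp := by rwa [hv, sub_eq_zero] at hv0
    refine ⟨hzzb, hzbzp, ?_⟩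
    -- subdifferential
    have hsub := prox_subdiff hproper hconv hγ0 hzb hrb
    have harg : γ⁻¹ • ((z - γ • F z) - zb) = -F z := by
      rw [← hzzb]
      have h9 : (z - γ • F z) - z = -(γ • F z) := by abel
      rw [h9, smul_neg, smul_smul, inv_mul_cancel₀ hγ0.ne', one_smul]
    rw [harg, ← hzzb] at hsub
    exact hsub
  · rintro ⟨h1, h2, _⟩
    subst h1; subst h2
    simp [lyapV, sub_self]
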